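/- Let G be a cograph with cotree T and x a vertex to be inserted. A node u of T is completion-forced if and only if there exists a unique cograph completion of G_u + x obtained by adding only edges incident to x, namely the one adding all missing edges between x and V(u). -/

import Mathlib

universe u

def IsCograph {α : Type*} (G : SimpleGraph α) : Prop :=
  ¬ ∃ f : Fin 4 → α, Function.Injective f ∧
      ∀ i j : Fin 4, G.Adj (f i) (f j) ↔ (i.val + 1 = j.val ∨ j.val + 1 = i.val)

inductive Cotree (V : Type u) : Type u where
  | leaf : V → Cotree V
  | node : Bool → List (Cotree V) → Cotree V

namespace Cotree

variable {V : Type u}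

def leaves : Cotree V → List V
  | .leaf v => [v]
  | .node _ ts => ts.attach.flatMap (fun t => t.1.leaves)

decreasing_by simp_wf; have := List.sizeOf_lt_of_mem t.2; omega

def subtrees : Cotree V → List (Cotree V)
  | .leaf v => [.leaf v]
  | .node b ts => .node b ts :: ts.attach.flatMap (fun t => t.1.subtrees)

decreasing_by simp_wf; have := List.sizeOf_lt_of_mem t.2; omega

def children : Cotree V → List (Cotree V)
  | .leaf _ => []
  | .node _ ts => ts

def isSeries : Cotree V → Prop
  | .node true _ => True
  | _ => False

def isParallel : Cotree V → Prop
  | .node false _ => True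
  | _ => False

def adj : Cotree V → V → V → Prop
  | .leaf _, _, _ => False
  | .node b ts, x, y =>
      (∃ t ∈ ts.attach, adj t.1 x y) ∨
      (b = true ∧ ∃ t ∈ ts.attach, ∃ s ∈ ts.attach,
        t.1 ≠ s.1 ∧ x ∈ t.1.leaves ∧ y ∈ s.1.leaves)

decreasing_by simp_wf; have := List.sizeOf_lt_of_mem t.2; omega

def valid : Cotree V → Prop
  | .leaf _ => True
  | .node b ts => 2 ≤ ts.length ∧ ∀ t ∈ ts.attach, valid t.1 ∧
      ∀ b' ts', t.1 = .node b' ts' → b' ≠ b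

decreasing_by simp_wf; have := List.sizeOf_lt_of_mem t.2; omega

def hollow (N : Set V) (t : Cotree V) : Prop := ∀ v ∈ t.leaves, v ∉ N
def full (N : Set V) (t : Cotree V) : Prop := ∀ v ∈ t.leaves, v ∈ N
def uniform (N : Set V) (t : Cotree V) : Prop := full N t ∨ hollow N t
def mixed (N : Set V) (t : Cotree V) : Prop := ¬ uniform N t

def forced (N : Set V) : Cotree V → Prop
  | .leaf v => v ∈ N
  | .node b ts =>
      full N (.node b ts) ∨
      (b = false ∧ ∀ t ∈ ts, ¬ hollow N t) ∨
      (b = true ∧ ∀ t ∈ ts.attach, forced N t.1)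

decreasing_by simp_wf; have := List.sizeOf_lt_of_mem t.2; omega

def eligible (N : Set V) : Cotree V → Cotree V → Prop
  | .leaf v, u => u = .leaf v
  | .node b ts, u => u = .node b ts ∨
      ∃ t ∈ ts.attach, eligible N t.1 u ∧
        (b = false → ∀ s ∈ ts, s ≠ t.1 → hollow N s)

decreasing_by simp_wf; have := List.sizeOf_lt_of_mem t.2; omega

def IsLcaLeaves (T u : Cotree V) (x y : V) : Prop :=
  u ∈ T.subtrees ∧ x ∈ u.leaves ∧ y ∈ u.leaves ∧
    ∀ c ∈ u.children, ¬ (x ∈ c.leaves ∧ y ∈ c.leaves)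

def IsLcaNodeLeaf (T w u : Cotree V) (y : V) : Prop :=
  w ∈ T.subtrees ∧ u ∈ w.subtrees ∧ y ∈ w.leaves ∧
    ∀ c ∈ w.children, ¬ (u ∈ c.subtrees ∧ y ∈ c.leaves)

def graphOf (T : Cotree V) : SimpleGraph V :=
  SimpleGraph.fromRel (fun a b => T.adj a b)

def graphPlus (T : Cotree V) (N : Set V) : SimpleGraph (Option V) :=
  SimpleGraph.fromRel (fun a b =>
    match a, b with
    | some u, some v => T.adj u v
    | none, some v => v ∈ N
    | _, _ => False)

def IsConstrainedCompletion (T : Cotree V) (Nx N' : Set V) : Prop :=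
  Nx ⊆ N' ∧ (∀ v ∈ N', v ∈ T.leaves) ∧ IsCograph (graphPlus T N')

def IsMinimalConstrainedCompletion (T : Cotree V) (Nx N' : Set V) : Prop :=
  IsConstrainedCompletion T Nx N' ∧
    ∀ N'' ⊆ N', IsConstrainedCompletion T Nx N'' → N'' = N'

def IsInsertionNode (T : Cotree V) (N' : Set V) (u : Cotree V) : Prop :=
  u ∈ T.subtrees ∧ mixed N' u ∧ (∀ c ∈ u.children, uniform N' c) ∧
    ∀ y ∈ T.leaves, y ∉ u.leaves →
      (y ∈ N' ↔ ∃ w, IsLcaNodeLeaf T w u y ∧ w.isSeries)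

def IsCMInsertionNode (T : Cotree V) (Nx : Set V) (u : Cotree V) : Prop :=
  ∃ N', IsMinimalConstrainedCompletion T Nx N' ∧ IsInsertionNode T N' u

def anchored (T u : Cotree V) (Nx : Set V) : Set V :=
  Nx ∪ {y | y ∈ T.leaves ∧ y ∉ u.leaves ∧ ∃ w, IsLcaNodeLeaf T w u y ∧ w.isSeries}
     ∪ {y | ∃ c ∈ u.children, ¬ hollow Nx c ∧ y ∈ c.leaves}

end Cotree

namespace Cotree
variable {V : Type u}

lemma leaves_node (b : Bool) (ts : List (Cotree V)) :
    (node b ts).leaves = ts.flatMap leaves := by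
  rw [leaves, List.flatMap, List.flatMap, List.attach_map_val]

lemma mem_leaves_node {v : V} {b : Bool} {ts : List (Cotree V)} :
    v ∈ (node b ts).leaves ↔ ∃ t ∈ ts, v ∈ t.leaves := by
  rw [leaves_node, List.mem_flatMap]

lemma adj_node_iff {b : Bool} {ts : List (Cotree V)} {x y : V} :
    (node b ts).adj x y ↔ (∃ t ∈ ts, t.adj x y) ∨
      (b = true ∧ ∃ t ∈ ts, ∃ s ∈ ts, t ≠ s ∧ x ∈ t.leaves ∧ y ∈ s.leaves) := by
  rw [adj]
  constructor
  · rintro (⟨t, _, h⟩ | ⟨hb, t, _, s, _, h1, h2, h3⟩)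
    · exact Or.inl ⟨t.1, t.2, h⟩
    · exact Or.inr ⟨hb, t.1, t.2, s.1, s.2, h1, h2, h3⟩
  · rintro (⟨t, ht, h⟩ | ⟨hb, t, ht, s, hs, h1, h2, h3⟩)
    · exact Or.inl ⟨⟨t, ht⟩, List.mem_attach _ _, h⟩
    · exact Or.inr ⟨hb, ⟨t, ht⟩, List.mem_attach _ _, ⟨s, hs⟩, List.mem_attach _ _, h1, h2, h3⟩

lemma valid_node {b : Bool} {ts : List (Cotree V)} :
    (node b ts).valid ↔ 2 ≤ ts.length ∧ ∀ t ∈ ts, t.valid ∧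
      ∀ b' ts', t = node b' ts' → b' ≠ b := by
  rw [valid]
  constructor
  · rintro ⟨h1, h2⟩
    exact ⟨h1, fun t ht => h2 ⟨t, ht⟩ (List.mem_attach _ _)⟩
  · rintro ⟨h1, h2⟩
    exact ⟨h1, fun t _ => h2 t.1 t.2⟩

lemma subtrees_node {b : Bool} {ts : List (Cotree V)} {w : Cotree V} :
    w ∈ (node b ts).subtrees ↔ w = node b ts ∨ ∃ t ∈ ts, w ∈ t.subtrees := by
  rw [subtrees]
  simp only [List.mem_cons, List.mem_flatMap, List.mem_attach, true_and]
  constructor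
  · rintro (h | ⟨t, h⟩); · exact Or.inl h
    · exact Or.inr ⟨t.1, t.2, h⟩
  · rintro (h | ⟨t, ht, h⟩); · exact Or.inl h
    · exact Or.inr ⟨⟨t, ht⟩, h⟩

end Cotree

namespace Cotree
variable {V : Type u}

lemma adj_mem : ∀ (u : Cotree V) {x y : V}, u.adj x y → x ∈ u.leaves ∧ y ∈ u.leaves
  | leaf _, _, _, h => by rw [adj] at h; exact h.elim
  | node b ts, x, y, h => by
    rw [adj_node_iff] at h
    rcases h with ⟨t, ht, h⟩ | ⟨_, t, ht, s, hs, _, hx, hy⟩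
    · have := adj_mem t h
      exact ⟨mem_leaves_node.2 ⟨t, ht, this.1⟩, mem_leaves_node.2 ⟨t, ht, this.2⟩⟩
    · exact ⟨mem_leaves_node.2 ⟨t, ht, hx⟩, mem_leaves_node.2 ⟨s, hs, hy⟩⟩
  decreasing_by simp_wf; have := List.sizeOf_lt_of_mem ht; omega

lemma leaves_ne_nil : ∀ (u : Cotree V), u.valid → u.leaves ≠ []
  | leaf v, _ => by rw [leaves]; simp
  | node b ts, h => by
    rw [valid_node] at h
    obtain ⟨t, ht⟩ : ∃ t, t ∈ ts := by
      cases ts with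
      | nil => simp at h
      | cons a l => exact ⟨a, List.mem_cons_self⟩
    have hne := leaves_ne_nil t (h.2 t ht).1
    rw [leaves_node]
    intro hc
    exact hne (List.flatMap_eq_nil_iff.1 hc t ht)
  decreasing_by simp_wf; have := List.sizeOf_lt_of_mem ht; omega

lemma valid_of_mem_subtrees : ∀ (T : Cotree V), T.valid → ∀ {u}, u ∈ T.subtrees → u.valid
  | leaf v, _, u, hu => by
    rw [subtrees] at hu
    simp at hu; subst hu; trivial
  | node b ts, h, u, hu => by
    rcases subtrees_node.1 hu with rfl | ⟨t, ht, hu⟩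
    · exact h
    · exact valid_of_mem_subtrees t ((valid_node.1 h).2 t ht).1 hu
  termination_by T => sizeOf T
  decreasing_by simp_wf; have := List.sizeOf_lt_of_mem ht; omega

lemma leaves_sublist_of_mem_subtrees :
    ∀ (T : Cotree V) {u : Cotree V}, u ∈ T.subtrees → u.leaves.Sublist T.leaves
  | leaf v, u, hu => by
    rw [subtrees] at hu; simp at hu; subst hu; exact List.Sublist.refl _
  | node b ts, u, hu => by
    rcases subtrees_node.1 hu with rfl | ⟨t, ht, hu⟩
    · exact List.Sublist.refl _
    · refine (leaves_sublist_of_mem_subtrees t hu).trans ?_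
      rw [leaves_node]
      exact List.sublist_flatten_of_mem (List.mem_map_of_mem (f := leaves) ht)
  termination_by T => sizeOf T
  decreasing_by simp_wf; have := List.sizeOf_lt_of_mem ht; omega

end Cotree

namespace Cotree
variable {V : Type u}

lemma nodup_child {b : Bool} {ts : List (Cotree V)} (hnd : (node b ts).leaves.Nodup)
    {t : Cotree V} (ht : t ∈ ts) : t.leaves.Nodup := by
  rw [leaves_node, List.nodup_flatMap] at hnd
  exact hnd.1 t ht

lemma disj_children {b : Bool} {ts : List (Cotree V)} (hnd : (node b ts).leaves.Nodup)
    {t s : Cotree V} (ht : t ∈ ts) (hs : s ∈ ts) (hne : t ≠ s) {v : V}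
    (hvt : v ∈ t.leaves) (hvs : v ∈ s.leaves) : False := by
  rw [leaves_node, List.nodup_flatMap] at hnd
  haveI : Std.Symm (Function.onFun List.Disjoint (leaves (V := V))) :=
    ⟨fun a b (h : (Function.onFun List.Disjoint leaves) a b) => List.Disjoint.symm h⟩
  have := hnd.2.forall ht hs hne
  exact this hvt hvs

/-- distinct-child existence -/
lemma exists_other_child {b : Bool} {ts : List (Cotree V)} (hval : (node b ts).valid)
    (hnd : (node b ts).leaves.Nodup) {t : Cotree V} (ht : t ∈ ts) :
    ∃ s ∈ ts, s ≠ t := by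
  by_contra hc
  push_neg at hc
  have h2 : 2 ≤ ts.length := (valid_node.1 hval).1
  have h0 : ts[0] = t := hc _ (List.getElem_mem (by omega))
  have h1 : ts[1] = t := hc _ (List.getElem_mem (by omega))
  rw [leaves_node, List.nodup_flatMap] at hnd
  have hp := List.pairwise_iff_getElem.1 hnd.2 0 1 (by omega) (by omega) (by omega)
  rw [h0, h1] at hp
  have hne := leaves_ne_nil t ((valid_node.1 hval).2 t ht).1
  obtain ⟨v, hv⟩ := List.exists_mem_of_ne_nil _ hne
  exact hp hv hv

end Cotree

namespace Cotree
variable {V : Type u}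

/-- membership in a child is unique under nodup -/
lemma child_unique {b : Bool} {ts : List (Cotree V)} (hnd : (node b ts).leaves.Nodup)
    {t s : Cotree V} (ht : t ∈ ts) (hs : s ∈ ts) {v : V}
    (hvt : v ∈ t.leaves) (hvs : v ∈ s.leaves) : t = s := by
  by_contra hne
  exact disj_children hnd ht hs hne hvt hvs

lemma adj_restrict {b : Bool} {ts : List (Cotree V)} (hnd : (node b ts).leaves.Nodup)
    {t : Cotree V} (ht : t ∈ ts) {x y : V} (hx : x ∈ t.leaves) (hy : y ∈ t.leaves) :
    (node b ts).adj x y ↔ t.adj x y := by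
  rw [adj_node_iff]
  constructor
  · rintro (⟨s, hs, h⟩ | ⟨_, t1, ht1, s1, hs1, hne, hx1, hy1⟩)
    · have := adj_mem s h
      rwa [child_unique hnd hs ht this.1 hx] at h
    · exact absurd ((child_unique hnd ht1 ht hx1 hx).trans
        (child_unique hnd ht hs1 hy hy1)) hne
  · intro h
    exact Or.inl ⟨t, ht, h⟩

/-- In a series node mixed wrt N, there is an edge from N to its complement. -/
lemma series_mixed_edge {ts : List (Cotree V)} (hval : (node true ts).valid)
    (hnd : (node true ts).leaves.Nodup) (N : Set V) {a b : V}
    (hal : a ∈ (node true ts).leaves) (haN : a ∈ N)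
    (hbl : b ∈ (node true ts).leaves) (hbN : b ∉ N) :
    ∃ a' b', (node true ts).adj a' b' ∧ a' ∈ N ∧ b' ∉ N ∧
      a' ∈ (node true ts).leaves ∧ b' ∈ (node true ts).leaves := by
  obtain ⟨t, ht, hat⟩ := mem_leaves_node.1 hal
  obtain ⟨s, hs, hbs⟩ := mem_leaves_node.1 hbl
  by_cases hts : t = s
  · subst hts
    obtain ⟨s', hs', hne⟩ := exists_other_child hval hnd ht
    obtain ⟨c, hc⟩ := List.exists_mem_of_ne_nil _ (leaves_ne_nil s' ((valid_node.1 hval).2 s' hs').1)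
    by_cases hcN : c ∈ N
    · refine ⟨c, b, ?_, hcN, hbN, mem_leaves_node.2 ⟨s', hs', hc⟩, hbl⟩
      exact adj_node_iff.2 (Or.inr ⟨rfl, s', hs', t, ht, hne, hc, hbs⟩)
    · refine ⟨a, c, ?_, haN, hcN, hal, mem_leaves_node.2 ⟨s', hs', hc⟩⟩
      exact adj_node_iff.2 (Or.inr ⟨rfl, t, ht, s', hs', Ne.symm hne, hat, hc⟩)
  · refine ⟨a, b, ?_, haN, hbN, hal, hbl⟩
    exact adj_node_iff.2 (Or.inr ⟨rfl, t, ht, s, hs, hts, hat, hbs⟩)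

end Cotree

namespace Cotree
variable {V : Type u}

lemma noP4 : ∀ (u : Cotree V), u.valid → u.leaves.Nodup →
    ¬ ∃ f : Fin 4 → V, Function.Injective f ∧
      ∀ i j : Fin 4, (f i ≠ f j ∧ (u.adj (f i) (f j) ∨ u.adj (f j) (f i))) ↔
        (i.val + 1 = j.val ∨ j.val + 1 = i.val)
  | leaf v, _, _, ⟨f, _, hE⟩ => by
    rcases ((hE 0 1).2 (Or.inl rfl)).2 with h | h <;> (rw [adj] at h; exact h)
  | node b ts, hval, hnd, ⟨f, hinj, hE⟩ => by
    have mem2 : ∀ i j : Fin 4, (i.val + 1 = j.val ∨ j.val + 1 = i.val) →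
        f i ∈ (node b ts).leaves ∧ f j ∈ (node b ts).leaves := by
      intro i j h
      rcases ((hE i j).2 h).2 with h' | h'
      · exact ⟨(adj_mem _ h').1, (adj_mem _ h').2⟩
      · exact ⟨(adj_mem _ h').2, (adj_mem _ h').1⟩
    have m : ∀ i : Fin 4, f i ∈ (node b ts).leaves := by
      intro i
      fin_cases i
      · exact (mem2 0 1 (Or.inl rfl)).1
      · exact (mem2 0 1 (Or.inl rfl)).2
      · exact (mem2 1 2 (Or.inl rfl)).2
      · exact (mem2 2 3 (Or.inl rfl)).2
    have hc : ∀ i : Fin 4, ∃ t ∈ ts, f i ∈ t.leaves := fun i => mem_leaves_node.1 (m i)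
    choose c hcmem hcleaf using hc
    -- all four vertices lie in the same child
    have hsame : ∀ i : Fin 4, c i = c 0 := by
      cases b with
      | false =>
        -- adjacent pairs are in the same child
        have step : ∀ i j : Fin 4, (i.val + 1 = j.val ∨ j.val + 1 = i.val) → c i = c j := by
          intro i j h
          rcases ((hE i j).2 h).2 with h' | h' <;>
          · rcases adj_node_iff.1 h' with ⟨s, hs, hadj⟩ | ⟨hb, _⟩
            · have h1 := adj_mem s hadj
              first
              | exact (child_unique hnd (hcmem i) hs (hcleaf i) h1.1).trans
                  (child_unique hnd hs (hcmem j) h1.2 (hcleaf j))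
              | exact (child_unique hnd (hcmem i) hs (hcleaf i) h1.2).trans
                  (child_unique hnd hs (hcmem j) h1.1 (hcleaf j))
            · exact absurd hb (by simp)
        intro i
        fin_cases i
        · rfl
        · exact (step 0 1 (Or.inl rfl)).symm
        · exact ((step 1 2 (Or.inl rfl)).symm.trans (step 0 1 (Or.inl rfl)).symm)
        · exact ((step 2 3 (Or.inl rfl)).symm.trans
            ((step 1 2 (Or.inl rfl)).symm.trans (step 0 1 (Or.inl rfl)).symm))
      | true =>
        -- non-adjacent pairs are in the same child
        have step : ∀ i j : Fin 4, i ≠ j → ¬(i.val + 1 = j.val ∨ j.val + 1 = i.val) →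
            c i = c j := by
          intro i j hij h
          by_contra hne
          exact h ((hE i j).1 ⟨fun he => hij (hinj he),
            Or.inl (adj_node_iff.2 (Or.inr ⟨rfl, c i, hcmem i, c j, hcmem j, hne,
              hcleaf i, hcleaf j⟩))⟩)
        intro i
        fin_cases i
        · rfl
        · exact (step 1 3 (by decide) (by decide)).trans
            (step 0 3 (by decide) (by decide)).symm
        · exact (step 0 2 (by decide) (by decide)).symm
        · exact (step 0 3 (by decide) (by decide)).symm
    -- now reduce to the child c 0
    have hc0 := hcmem 0
    have hleaf0 : ∀ i, f i ∈ (c 0).leaves := fun i => hsame i ▸ hcleaf i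
    refine noP4 (c 0) ((valid_node.1 hval).2 _ hc0).1 (nodup_child hnd hc0)
      ⟨f, hinj, fun i j => ?_⟩
    rw [← hE i j, and_congr_right_iff]
    intro _
    rw [adj_restrict hnd hc0 (hleaf0 i) (hleaf0 j),
      adj_restrict hnd hc0 (hleaf0 j) (hleaf0 i)]
  termination_by u => sizeOf u
  decreasing_by simp_wf; have := List.sizeOf_lt_of_mem hc0; omega

end Cotree

namespace Cotree
variable {V : Type u}

lemma graphPlus_adj_some_some {u : Cotree V} {N : Set V} {a b : V} :
    (graphPlus u N).Adj (some a) (some b) ↔ a ≠ b ∧ (u.adj a b ∨ u.adj b a) := by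
  rw [graphPlus, SimpleGraph.fromRel_adj]
  simp

lemma graphPlus_adj_none_some {u : Cotree V} {N : Set V} {b : V} :
    (graphPlus u N).Adj none (some b) ↔ b ∈ N := by
  rw [graphPlus, SimpleGraph.fromRel_adj]
  simp

lemma graphPlus_adj_some_none {u : Cotree V} {N : Set V} {a : V} :
    (graphPlus u N).Adj (some a) none ↔ a ∈ N := by
  rw [graphPlus, SimpleGraph.fromRel_adj]
  simp

lemma graphPlus_not_adj_none_none {u : Cotree V} {N : Set V} :
    ¬ (graphPlus u N).Adj none none := fun h => h.ne rfl

/-- every vertex of a `P4` in `graphPlus u N` is `none` or a leaf of `u`, provided `N ⊆ leaves`. -/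
lemma P4_vertex_mem {u : Cotree V} {N : Set V} (hN : ∀ v ∈ N, v ∈ u.leaves)
    {f : Fin 4 → Option V}
    (hE : ∀ i j : Fin 4, (graphPlus u N).Adj (f i) (f j) ↔
      (i.val + 1 = j.val ∨ j.val + 1 = i.val)) :
    ∀ i : Fin 4, f i = none ∨ ∃ v ∈ u.leaves, f i = some v := by
  have key : ∀ i j : Fin 4, (graphPlus u N).Adj (f i) (f j) →
      f i = none ∨ ∃ v ∈ u.leaves, f i = some v := by
    intro i j hadj
    match hfi : f i with
    | none => exact Or.inl rfl
    | some v =>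
      refine Or.inr ⟨v, ?_, rfl⟩
      rw [hfi] at hadj
      match hfj : f j with
      | none =>
        rw [hfj, graphPlus_adj_some_none] at hadj
        exact hN v hadj
      | some w =>
        rw [hfj, graphPlus_adj_some_some] at hadj
        rcases hadj.2 with h | h
        · exact (adj_mem _ h).1
        · exact (adj_mem _ h).2
  intro i
  fin_cases i
  · exact key 0 1 ((hE 0 1).2 (Or.inl rfl))
  · exact key 1 0 ((hE 1 0).2 (Or.inr rfl))
  · exact key 2 1 ((hE 2 1).2 (Or.inr rfl))
  · exact key 3 2 ((hE 3 2).2 (Or.inr rfl))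

/-- a vertex adjacent to everything else cannot belong to a `P4`. -/
lemma P4_no_dominating {G : SimpleGraph (Option V)} {f : Fin 4 → Option V}
    (hinj : Function.Injective f)
    (hE : ∀ i j : Fin 4, G.Adj (f i) (f j) ↔ (i.val + 1 = j.val ∨ j.val + 1 = i.val))
    {x : Option V} (hdom : ∀ i, f i ≠ x → G.Adj x (f i)) (i : Fin 4) : f i ≠ x := by
  intro hfi
  have key : ∀ j : Fin 4, i ≠ j → ¬(i.val + 1 = j.val ∨ j.val + 1 = i.val) → False := by
    intro j hij hcons
    have hne : f j ≠ x := fun h => hij (hinj (hfi.trans h.symm))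
    exact hcons ((hE i j).1 (hfi ▸ hdom j hne))
  fin_cases i
  · exact key 2 (by decide) (by decide)
  · exact key 3 (by decide) (by decide)
  · exact key 0 (by decide) (by decide)
  · exact key 1 (by decide) (by decide)

end Cotree

namespace Cotree
variable {V : Type u}

/-- if all `P4` vertices are `some` of leaves, extract a `P4` in the cotree adjacency. -/
lemma noP4_plus_of_all_some {u : Cotree V} (hval : u.valid) (hnd : u.leaves.Nodup)
    {N : Set V} {f : Fin 4 → Option V} (hinj : Function.Injective f)
    (hE : ∀ i j : Fin 4, (graphPlus u N).Adj (f i) (f j) ↔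
      (i.val + 1 = j.val ∨ j.val + 1 = i.val))
    (hall : ∀ i, ∃ v, v ∈ u.leaves ∧ f i = some v) : False := by
  choose g hg1 hg2 using hall
  refine noP4 u hval hnd ⟨g, ?_, fun i j => ?_⟩
  · intro i j h
    exact hinj (by rw [hg2 i, hg2 j, h])
  · rw [← hE i j, hg2 i, hg2 j, graphPlus_adj_some_some]

lemma cograph_plus_full (u : Cotree V) (hval : u.valid) (hnd : u.leaves.Nodup) :
    IsCograph (graphPlus u {v | v ∈ u.leaves}) := by
  rintro ⟨f, hinj, hE⟩
  have hN : ∀ v ∈ {v | v ∈ u.leaves}, v ∈ u.leaves := fun v hv => hv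
  have hvm := P4_vertex_mem hN hE
  refine noP4_plus_of_all_some hval hnd hinj hE (fun i => ?_)
  rcases hvm i with h | ⟨v, hv, h⟩
  · exfalso
    refine P4_no_dominating hinj hE (x := none) (fun j hj => ?_) i h
    rcases hvm j with h' | ⟨w, hw, h'⟩
    · exact absurd h' hj
    · rw [h', graphPlus_adj_none_some]
      exact hw
  · exact ⟨v, hv, h⟩

end Cotree

namespace Cotree
variable {V : Type u}

/-- transfer adjacency between a child's `graphPlus` and the parent's,
when the neighborhoods agree on the child's leaves. -/
lemma graphPlus_child_transfer {b : Bool} {ts : List (Cotree V)}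
    (hnd : (node b ts).leaves.Nodup) {t0 : Cotree V} (ht0 : t0 ∈ ts)
    {M N : Set V} (hMN : ∀ v ∈ t0.leaves, (v ∈ M ↔ v ∈ N))
    {x y : Option V}
    (hx : x = none ∨ ∃ v, v ∈ t0.leaves ∧ x = some v)
    (hy : y = none ∨ ∃ v, v ∈ t0.leaves ∧ y = some v) :
    (graphPlus t0 M).Adj x y ↔ (graphPlus (node b ts) N).Adj x y := by
  rcases hx with rfl | ⟨v, hv, rfl⟩ <;> rcases hy with rfl | ⟨w, hw, rfl⟩
  · simp [graphPlus_not_adj_none_none,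
      (fun h => (graphPlus_not_adj_none_none h : False) :
        ¬ (graphPlus (node b ts) N).Adj none none)]
  · rw [graphPlus_adj_none_some, graphPlus_adj_none_some]
    exact hMN w hw
  · rw [graphPlus_adj_some_none, graphPlus_adj_some_none]
    exact hMN v hv
  · rw [graphPlus_adj_some_some, graphPlus_adj_some_some,
      adj_restrict hnd ht0 hv hw, adj_restrict hnd ht0 hw hv]

/-- the completion induced on a child of the root is still a cograph. -/
lemma cograph_plus_child {b : Bool} {ts : List (Cotree V)}
    (hnd : (node b ts).leaves.Nodup) {t0 : Cotree V} (ht0 : t0 ∈ ts) {N : Set V}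
    (hcog : IsCograph (graphPlus (node b ts) N)) :
    IsCograph (graphPlus t0 (N ∩ {v | v ∈ t0.leaves})) := by
  rintro ⟨f, hinj, hE⟩
  have hN : ∀ v ∈ N ∩ {v | v ∈ t0.leaves}, v ∈ t0.leaves := fun v hv => hv.2
  have hvm := P4_vertex_mem hN hE
  refine hcog ⟨f, hinj, fun i j => ?_⟩
  rw [← graphPlus_child_transfer hnd ht0 (fun v hv => ?_) (hvm i) (hvm j)]
  · exact hE i j
  · simp only [Set.mem_inter_iff, Set.mem_setOf_eq]
    tauto

end Cotree

namespace Cotree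
variable {V : Type u}

lemma cograph_plus_parallel_split {ts : List (Cotree V)}
    (hval : (node false ts).valid) (hnd : (node false ts).leaves.Nodup)
    {t0 : Cotree V} (ht0 : t0 ∈ ts) :
    IsCograph (graphPlus (node false ts)
      {v | v ∈ (node false ts).leaves ∧ v ∉ t0.leaves}) := by
  set u := node false ts with hu
  set N : Set V := {v | v ∈ u.leaves ∧ v ∉ t0.leaves} with hN
  rintro ⟨f, hinj, hE⟩
  have hNl : ∀ v ∈ N, v ∈ u.leaves := fun v hv => hv.1
  have hvm := P4_vertex_mem hNl hE
  by_cases hnone : ∃ i0, f i0 = none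
  · obtain ⟨i0, hi0⟩ := hnone
    set s : Fin 4 → Prop := fun i => ∀ v, f i = some v → v ∉ t0.leaves with hs
    have edge_same : ∀ i j : Fin 4, (graphPlus u N).Adj (f i) (f j) → s i → s j := by
      intro i j hadj hsi w hw
      rcases hvm i with hfi | ⟨v, hv, hfi⟩
      · rw [hfi, hw, graphPlus_adj_none_some] at hadj
        exact hadj.2
      · rw [hfi, hw, graphPlus_adj_some_some] at hadj
        intro hwt0
        have hvu : v ∉ t0.leaves := hsi v hfi
        have : ∃ c ∈ ts, c.adj v w ∨ c.adj w v := by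
          rcases hadj.2 with h | h
          · rcases adj_node_iff.1 h with ⟨c, hc, h'⟩ | ⟨hb, _⟩
            · exact ⟨c, hc, Or.inl h'⟩
            · exact absurd hb (by simp)
          · rcases adj_node_iff.1 h with ⟨c, hc, h'⟩ | ⟨hb, _⟩
            · exact ⟨c, hc, Or.inr h'⟩
            · exact absurd hb (by simp)
        obtain ⟨c, hc, h'⟩ := this
        have hcvw : v ∈ c.leaves ∧ w ∈ c.leaves := by
          rcases h' with h' | h'
          · exact adj_mem c h'
          · exact ⟨(adj_mem c h').2, (adj_mem c h').1⟩
        have : c = t0 := child_unique hnd hc ht0 hcvw.2 hwt0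
        exact hvu (this ▸ hcvw.1)
    have siff : ∀ i j : Fin 4, (i.val + 1 = j.val ∨ j.val + 1 = i.val) → (s i ↔ s j) := by
      intro i j h
      have hadj := (hE i j).2 h
      exact ⟨edge_same i j hadj, edge_same j i hadj.symm⟩
    have sall : ∀ i, s i := by
      have hsi0 : s i0 := fun v hv => by rw [hi0] at hv; exact absurd hv (by simp)
      have e01 := siff 0 1 (Or.inl rfl)
      have e12 := siff 1 2 (Or.inl rfl)
      have e23 := siff 2 3 (Or.inl rfl)
      clear hE hvm edge_same hNl hinj
      intro i
      fin_cases i0 <;> fin_cases i <;> tauto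
    refine P4_no_dominating hinj hE (x := none) (fun j hj => ?_) i0 hi0
    rcases hvm j with hfj | ⟨w, hw, hfj⟩
    · exact absurd hfj hj
    · rw [hfj, graphPlus_adj_none_some]
      exact ⟨hw, sall j w hfj⟩
  · push_neg at hnone
    refine noP4_plus_of_all_some hval hnd hinj hE (fun i => ?_)
    rcases hvm i with h | ⟨v, hv, h⟩
    · exact absurd h (hnone i)
    · exact ⟨v, hv, h⟩

end Cotree

namespace Cotree
variable {V : Type u}

lemma cograph_plus_series_mix {ts : List (Cotree V)}
    (hval : (node true ts).valid) (hnd : (node true ts).leaves.Nodup)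
    {t0 : Cotree V} (ht0 : t0 ∈ ts) {M : Set V} (hM : ∀ v ∈ M, v ∈ t0.leaves)
    (hMcog : IsCograph (graphPlus t0 M)) :
    IsCograph (graphPlus (node true ts)
      (M ∪ {v | v ∈ (node true ts).leaves ∧ v ∉ t0.leaves})) := by
  set u := node true ts with hu
  set N : Set V := M ∪ {v | v ∈ u.leaves ∧ v ∉ t0.leaves} with hN
  rintro ⟨f, hinj, hE⟩
  have hNl : ∀ v ∈ N, v ∈ u.leaves := by
    rintro v (hv | hv)
    · exact mem_leaves_node.2 ⟨t0, ht0, hM v hv⟩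
    · exact hv.1
  have hvm := P4_vertex_mem hNl hE
  by_cases hnone : ∃ i0, f i0 = none
  · obtain ⟨i0, hi0⟩ := hnone
    set s : Fin 4 → Prop := fun i => ∀ v, f i = some v → v ∈ t0.leaves with hs
    have nonedge_adj : ∀ i j : Fin 4, s i → ¬ s j → f i ≠ f j →
        (graphPlus u N).Adj (f i) (f j) := by
      intro i j hsi hsj hne
      have : ∃ w, f j = some w ∧ w ∉ t0.leaves := by
        rcases hvm j with hfj | ⟨w, hw, hfj⟩
        · exact absurd (fun v hv => by rw [hfj] at hv; exact absurd hv (by simp)) hsj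
        · by_cases hwt : w ∈ t0.leaves
          · exact absurd (fun v hv => by
              rw [hfj] at hv
              exact (Option.some_inj.1 hv) ▸ hwt) hsj
          · exact ⟨w, hfj, hwt⟩
      obtain ⟨w, hfj, hwt⟩ := this
      have hwu : w ∈ u.leaves := by
        rcases hvm j with hfj' | ⟨w', hw', hfj'⟩
        · rw [hfj] at hfj'; exact absurd hfj' (by simp)
        · rw [hfj] at hfj'; rwa [← Option.some_inj.1 hfj'] at hw'
      obtain ⟨c, hc, hwc⟩ := mem_leaves_node.1 hwu
      have hct0 : t0 ≠ c := fun h => hwt (h ▸ hwc)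
      rcases hvm i with hfi | ⟨v, hv, hfi⟩
      · rw [hfi, hfj, graphPlus_adj_none_some]
        exact Or.inr ⟨hwu, hwt⟩
      · have hvt0 : v ∈ t0.leaves := hsi v hfi
        rw [hfi, hfj, graphPlus_adj_some_some]
        refine ⟨fun h => hne (by rw [hfi, hfj, h]), Or.inl ?_⟩
        exact adj_node_iff.2 (Or.inr ⟨rfl, t0, ht0, c, hc, hct0, hvt0, hwc⟩)
    have siff : ∀ i j : Fin 4, i ≠ j → ¬(i.val + 1 = j.val ∨ j.val + 1 = i.val) →
        (s i ↔ s j) := by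
      intro i j hij h
      have hne : f i ≠ f j := fun he => hij (hinj he)
      constructor
      · intro hsi
        by_contra hsj
        exact h ((hE i j).1 (nonedge_adj i j hsi hsj hne))
      · intro hsj
        by_contra hsi
        exact h ((hE j i).1 (nonedge_adj j i hsj hsi hne.symm)).symm
    have sall : ∀ i, s i := by
      have hsi0 : s i0 := fun v hv => by rw [hi0] at hv; exact absurd hv (by simp)
      have e02 := siff 0 2 (by decide) (by decide)
      have e03 := siff 0 3 (by decide) (by decide)
      have e13 := siff 1 3 (by decide) (by decide)
      clear hE hvm nonedge_adj siff hNl hinj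
      intro i
      fin_cases i0 <;> fin_cases i <;> tauto
    -- transfer the P4 into `graphPlus t0 M`
    refine hMcog ⟨f, hinj, fun i j => ?_⟩
    have hvm' : ∀ i : Fin 4, f i = none ∨ ∃ v, v ∈ t0.leaves ∧ f i = some v := by
      intro i
      rcases hvm i with h | ⟨v, hv, h⟩
      · exact Or.inl h
      · exact Or.inr ⟨v, sall i v h, h⟩
    rw [graphPlus_child_transfer hnd ht0 (fun v hv => ?_) (hvm' i) (hvm' j)]
    · exact hE i j
    · constructor
      · intro h; exact Or.inl h
      · rintro (h | h)
        · exact h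
        · exact absurd hv h.2
  · push_neg at hnone
    refine noP4_plus_of_all_some hval hnd hinj hE (fun i => ?_)
    rcases hvm i with h | ⟨v, hv, h⟩
    · exact absurd h (hnone i)
    · exact ⟨v, hv, h⟩

end Cotree

namespace Cotree
variable {V : Type u}

lemma forced_node {N : Set V} {b : Bool} {ts : List (Cotree V)} :
    forced N (node b ts) ↔ full N (node b ts) ∨
      (b = false ∧ ∀ t ∈ ts, ¬ hollow N t) ∨
      (b = true ∧ ∀ t ∈ ts, forced N t) := by
  rw [forced]
  constructor
  · rintro (h | h | ⟨hb, h⟩)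
    · exact Or.inl h
    · exact Or.inr (Or.inl h)
    · exact Or.inr (Or.inr ⟨hb, fun t ht => h ⟨t, ht⟩ (List.mem_attach _ _)⟩)
  · rintro (h | h | ⟨hb, h⟩)
    · exact Or.inl h
    · exact Or.inr (Or.inl h)
    · exact Or.inr (Or.inr ⟨hb, fun t _ => h t.1 t.2⟩)

lemma not_isCograph_of_P4 {α : Type*} {G : SimpleGraph α} {a b c d : α}
    (hab : G.Adj a b) (hbc : G.Adj b c) (hcd : G.Adj c d)
    (hac : ¬ G.Adj a c) (had : ¬ G.Adj a d) (hbd : ¬ G.Adj b d)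
    (hneac : a ≠ c) (hnead : a ≠ d) (hnebd : b ≠ d) : ¬ IsCograph G := by
  intro hcog
  refine hcog ⟨![a, b, c, d], ?_, ?_⟩
  · intro i j hij
    fin_cases i <;> fin_cases j <;>
      simp only [Matrix.cons_val_zero, Matrix.cons_val_one, Matrix.head_cons,
        Matrix.cons_val_two, Matrix.tail_cons, Matrix.cons_val_three] at hij ⊢ <;>
      first
        | rfl
        | exact absurd hij hab.ne
        | exact absurd hij hbc.ne
        | exact absurd hij hcd.ne
        | exact absurd hij hab.ne'
        | exact absurd hij hbc.ne'
        | exact absurd hij hcd.ne'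
        | exact absurd hij hneac
        | exact absurd hij hnead
        | exact absurd hij hnebd
        | exact absurd hij.symm hneac
        | exact absurd hij.symm hnead
        | exact absurd hij.symm hnebd
  · intro i j
    fin_cases i <;> fin_cases j <;>
      simp only [Matrix.cons_val_zero, Matrix.cons_val_one, Matrix.head_cons,
        Matrix.cons_val_two, Matrix.tail_cons, Matrix.cons_val_three, Fin.isValue] <;>
      norm_num <;>
      first
        | exact G.irrefl
        | exact hab
        | exact hbc
        | exact hcd
        | exact hab.symm
        | exact hbc.symm
        | exact hcd.symm
        | exact hac
        | exact had
        | exact hbd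
        | exact fun h => hac h.symm
        | exact fun h => had h.symm
        | exact fun h => hbd h.symm

end Cotree

namespace Cotree
variable {V : Type u}

lemma parallel_not_adj {ts : List (Cotree V)} (hnd : (node false ts).leaves.Nodup)
    {t s : Cotree V} (ht : t ∈ ts) (hs : s ∈ ts) (hne : t ≠ s) {v w : V}
    (hv : v ∈ t.leaves) (hw : w ∈ s.leaves) : ¬ (node false ts).adj v w := by
  intro h
  rcases adj_node_iff.1 h with ⟨c, hc, h'⟩ | ⟨hb, _⟩
  · have hm := adj_mem c h'
    have h1 : c = t := child_unique hnd hc ht hm.1 hv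
    have h2 : c = s := child_unique hnd hc hs hm.2 hw
    exact hne (h1.symm.trans h2)
  · simp at hb

theorem aux : ∀ (u : Cotree V), u.valid → u.leaves.Nodup → ∀ Nx : Set V,
    (forced Nx u ↔ ∀ N' : Set V,
      IsConstrainedCompletion u (Nx ∩ {v | v ∈ u.leaves}) N' ↔ N' = {v | v ∈ u.leaves})
  | leaf x, hval, hnd, Nx => by
    constructor
    · intro hf N'
      rw [forced] at hf
      constructor
      · rintro ⟨hsub, hsub2, _⟩
        ext w
        simp only [Set.mem_setOf_eq]
        constructor
        · exact fun hw => hsub2 w hw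
        · intro hw
          rw [leaves] at hw
          simp at hw
          subst hw
          exact hsub ⟨hf, by rw [leaves]; simp⟩
      · rintro rfl
        exact ⟨fun v hv => hv.2, fun v hv => hv, cograph_plus_full _ hval hnd⟩
    · intro H
      by_contra hf
      rw [forced] at hf
      have hcomp : IsConstrainedCompletion (leaf x) (Nx ∩ {v | v ∈ (leaf x).leaves})
          (∅ : Set V) := by
        refine ⟨?_, fun v hv => hv.elim, ?_⟩
        · rintro v ⟨hv1, hv2⟩
          rw [leaves] at hv2
          simp at hv2
          subst hv2
          exact hf hv1
        · rintro ⟨f, hinj, hE⟩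
          have h := (hE 0 1).2 (Or.inl rfl)
          rw [graphPlus, SimpleGraph.fromRel_adj] at h
          rcases h with ⟨-, h | h⟩ <;>
          · rcases hx : f 0 with _ | a <;> rcases hy : f 1 with _ | b <;>
              rw [hx, hy] at h <;> simp [adj] at h
      have := (H ∅).1 hcomp
      have hx : x ∈ ({v | v ∈ (leaf x).leaves} : Set V) := by
        rw [leaves]; simp
      rw [← this] at hx
      exact hx
  | node b ts, hval, hnd, Nx => by
    have IH : ∀ t ∈ ts, (forced Nx t ↔ ∀ N' : Set V,
        IsConstrainedCompletion t (Nx ∩ {v | v ∈ t.leaves}) N' ↔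
          N' = {v | v ∈ t.leaves}) := fun t ht =>
      aux t ((valid_node.1 hval).2 t ht).1 (nodup_child hnd ht) Nx
    constructor
    · intro hf N'
      constructor
      · rintro ⟨hsub, hsub2, hcog⟩
        refine Set.Subset.antisymm (fun v hv => hsub2 v hv) (fun v hv => ?_)
        rcases forced_node.1 hf with hfull | ⟨hb, hnh⟩ | ⟨hb, hfor⟩
        · exact hsub ⟨hfull v hv, hv⟩
        · subst hb
          obtain ⟨t, ht, hvt⟩ := mem_leaves_node.1 hv
          by_contra hvN
          have hnh' := hnh t ht
          simp only [hollow] at hnh'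
          push_neg at hnh'
          obtain ⟨z, hzt, hzNx⟩ := hnh'
          have hzN' : z ∈ N' := hsub ⟨hzNx, mem_leaves_node.2 ⟨t, ht, hzt⟩⟩
          obtain ⟨s, hs, hst⟩ := exists_other_child hval hnd ht
          have hnh2 := hnh s hs
          simp only [hollow] at hnh2
          push_neg at hnh2
          obtain ⟨z', hz't, hz'Nx⟩ := hnh2
          have hz'N' : z' ∈ N' := hsub ⟨hz'Nx, mem_leaves_node.2 ⟨s, hs, hz't⟩⟩
          have hedge : ∃ av bv, t.adj av bv ∧ av ∈ N' ∧ bv ∉ N' ∧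
              av ∈ t.leaves ∧ bv ∈ t.leaves := by
            cases t with
            | leaf y =>
              rw [leaves] at hzt hvt
              simp at hzt hvt
              subst hzt
              subst hvt
              exact absurd hzN' hvN
            | node b' ss =>
              have hb' : b' ≠ false := ((valid_node.1 hval).2 _ ht).2 b' ss rfl
              have hb'' : b' = true := by cases b' <;> simp_all
              subst hb''
              exact series_mixed_edge ((valid_node.1 hval).2 _ ht).1
                (nodup_child hnd ht) N' hzt hzN' hvt hvN
          obtain ⟨av, bv, hadj, havN, hbvN, havt, hbvt⟩ := hedge
          have hbvz' : bv ≠ z' := fun h => disj_children hnd ht hs (Ne.symm hst) hbvt (h ▸ hz't)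
          have havz' : av ≠ z' := fun h => disj_children hnd ht hs (Ne.symm hst) havt (h ▸ hz't)
          refine not_isCograph_of_P4 (G := graphPlus (node false ts) N')
            (a := some bv) (b := some av) (c := none) (d := some z')
            ?_ ?_ ?_ ?_ ?_ ?_ ?_ ?_ ?_ hcog
          · rw [graphPlus_adj_some_some]
            exact ⟨fun h => hbvN (h ▸ havN), Or.inr (adj_node_iff.2 (Or.inl ⟨t, ht, hadj⟩))⟩
          · rw [graphPlus_adj_some_none]
            exact havN
          · rw [graphPlus_adj_none_some]
            exact hz'N'
          · rw [graphPlus_adj_some_none]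
            exact hbvN
          · rw [graphPlus_adj_some_some]
            rintro ⟨-, h | h⟩
            · exact parallel_not_adj hnd ht hs (Ne.symm hst) hbvt hz't h
            · exact parallel_not_adj hnd hs ht hst hz't hbvt h
          · rw [graphPlus_adj_some_some]
            rintro ⟨-, h | h⟩
            · exact parallel_not_adj hnd ht hs (Ne.symm hst) havt hz't h
            · exact parallel_not_adj hnd hs ht hst hz't havt h
          · simp
          · simp [hbvz']
          · simp [havz']
        · subst hb
          obtain ⟨t, ht, hvt⟩ := mem_leaves_node.1 hv
          have hc := cograph_plus_child hnd ht hcog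
          have hcomp : IsConstrainedCompletion t (Nx ∩ {w | w ∈ t.leaves})
              (N' ∩ {w | w ∈ t.leaves}) := by
            refine ⟨?_, fun w hw => hw.2, hc⟩
            rintro w ⟨hw1, hw2⟩
            exact ⟨hsub ⟨hw1, mem_leaves_node.2 ⟨t, ht, hw2⟩⟩, hw2⟩
          have heq := ((IH t ht).1 (hfor t ht) _).1 hcomp
          have : v ∈ N' ∩ {w | w ∈ t.leaves} := by rw [heq]; exact hvt
          exact this.1
      · rintro rfl
        exact ⟨fun v hv => hv.2, fun v hv => hv, cograph_plus_full _ hval hnd⟩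
    · intro H
      by_contra hnf
      rw [forced_node] at hnf
      push_neg at hnf
      obtain ⟨hnfull, h2, h3⟩ := hnf
      cases b with
      | false =>
        have hex : ∃ t ∈ ts, hollow Nx t := by
          have := h2 rfl
          exact this
        obtain ⟨t, ht, hhol⟩ := hex
        set u := node false ts with hu
        set N' : Set V := {v | v ∈ u.leaves ∧ v ∉ t.leaves} with hN'
        have hcomp : IsConstrainedCompletion u (Nx ∩ {v | v ∈ u.leaves}) N' := by
          refine ⟨?_, fun v hv => hv.1, cograph_plus_parallel_split hval hnd ht⟩
          rintro v ⟨hv1, hv2⟩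
          exact ⟨hv2, fun hvt => hhol v hvt hv1⟩
        have heq := (H N').1 hcomp
        obtain ⟨w, hw⟩ := List.exists_mem_of_ne_nil _
          (leaves_ne_nil t ((valid_node.1 hval).2 t ht).1)
        have hwu : w ∈ ({v | v ∈ u.leaves} : Set V) := mem_leaves_node.2 ⟨t, ht, hw⟩
        rw [← heq] at hwu
        exact hwu.2 hw
      | true =>
        have hex : ∃ t ∈ ts, ¬ forced Nx t := by
          have := h3 rfl
          exact this
        obtain ⟨t, ht, hnt⟩ := hex
        have hnIH : ¬ ∀ N' : Set V,
            IsConstrainedCompletion t (Nx ∩ {v | v ∈ t.leaves}) N' ↔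
              N' = {v | v ∈ t.leaves} := fun h => hnt ((IH t ht).2 h)
        push_neg at hnIH
        obtain ⟨M, hM⟩ := hnIH
        have htval := ((valid_node.1 hval).2 t ht).1
        have htnd := nodup_child hnd ht
        have hMcomp : IsConstrainedCompletion t (Nx ∩ {v | v ∈ t.leaves}) M ∧
            M ≠ {v | v ∈ t.leaves} := by
          rcases hM with h | ⟨hnc, hMe⟩
          · exact h
          · exfalso
            apply hnc
            subst hMe
            exact ⟨fun v hv => hv.2, fun v hv => hv, cograph_plus_full t htval htnd⟩
        obtain ⟨⟨hMsub, hMl, hMcog⟩, hMne⟩ := hMcomp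
        set u := node true ts with hu
        set N' : Set V := M ∪ {v | v ∈ u.leaves ∧ v ∉ t.leaves} with hN'
        have hcomp : IsConstrainedCompletion u (Nx ∩ {v | v ∈ u.leaves}) N' := by
          refine ⟨?_, ?_, cograph_plus_series_mix hval hnd ht hMl hMcog⟩
          · rintro v ⟨hv1, hv2⟩
            by_cases hvt : v ∈ t.leaves
            · exact Or.inl (hMsub ⟨hv1, hvt⟩)
            · exact Or.inr ⟨hv2, hvt⟩
          · rintro v (hv | hv)
            · exact mem_leaves_node.2 ⟨t, ht, hMl v hv⟩
            · exact hv.1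
        have heq := (H N').1 hcomp
        obtain ⟨w, hwt, hwM⟩ : ∃ w, w ∈ t.leaves ∧ w ∉ M := by
          by_contra hc
          push_neg at hc
          exact hMne (Set.Subset.antisymm (fun v hv => hMl v hv) (fun v hv => hc v hv))
        have hwu : w ∈ ({v | v ∈ u.leaves} : Set V) := mem_leaves_node.2 ⟨t, ht, hwt⟩
        rw [← heq] at hwu
        rcases hwu with hw | hw
        · exact hwM hw
        · exact hw.2 hwt
  termination_by u => sizeOf u
  decreasing_by simp_wf; have := List.sizeOf_lt_of_mem ht; omega

end Cotree

theorem stmt_8 {V : Type u} (T : Cotree V) (Nx : Set V)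
    (hval : T.valid) (hnd : T.leaves.Nodup) (hNx : ∀ v ∈ Nx, v ∈ T.leaves)
    (u : Cotree V) (hu : u ∈ T.subtrees) :
    Cotree.forced Nx u ↔
      ∀ N' : Set V,
        Cotree.IsConstrainedCompletion u (Nx ∩ {v | v ∈ u.leaves}) N' ↔
          N' = {v | v ∈ u.leaves} := by
  exact Cotree.aux u (Cotree.valid_of_mem_subtrees T hval hu)
    ((Cotree.leaves_sublist_of_mem_subtrees T hu).nodup hnd) Nx
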